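/- arXiv:1809.09681 — 2 statements merged into one kernel-verified Lean document; each statement's English description precedes it below -/
import Mathlib

section
/- For every nonnegative integer d, the polynomials p_d(z) = P_{d,d}(z) satisfy the differential-recurrence identity 2z(3z+1) p_d'(z) = (3dz + 4d + 2) p_d(z) - (d+1) p_{d+1}(z) as polynomials in z over the rationals. -/
open Polynomial

/-- The multinomial coefficient `(a+b+c)! / (a! b! c!)`. -/
def mult3 (a b c : ℕ) : ℕ := (a + b + c).factorial / (a.factorial * b.factorial * c.factorial)

/-- `P k n = ∑_{b=0}^{⌊n/2⌋} multinomial(k+n-b; k, b, n-2b) z^b ∈ ℚ[z]`. -/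
noncomputable def Ppoly (k n : ℕ) : Polynomial ℚ :=
  ∑ b ∈ Finset.range (n / 2 + 1), C (mult3 k b (n - 2 * b) : ℚ) * X ^ b

lemma mult3_cast (a b c : ℕ) :
    (mult3 a b c : ℚ) = (a+b+c).factorial / (a.factorial * b.factorial * c.factorial) := by
  have hdvd : a.factorial * b.factorial * c.factorial ∣ (a+b+c).factorial := by
    calc a.factorial * b.factorial * c.factorial
        = a.factorial * (b.factorial * c.factorial) := by ring
      _ ∣ a.factorial * (b+c).factorial :=
          mul_dvd_mul_left _ (Nat.factorial_mul_factorial_dvd_factorial_add b c)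
      _ ∣ (a+(b+c)).factorial := Nat.factorial_mul_factorial_dvd_factorial_add a (b+c)
      _ = (a+b+c).factorial := by ring_nf
  rw [mult3, Nat.cast_div hdvd (by positivity)]
  push_cast
  ring

lemma coeff_Ppoly (k n b : ℕ) :
    (Ppoly k n).coeff b = if b ≤ n/2 then (mult3 k b (n - 2*b) : ℚ) else 0 := by
  unfold Ppoly
  rw [finset_sum_coeff]
  simp only [coeff_C_mul, coeff_X_pow, mul_ite, mul_one, mul_zero]
  rw [Finset.sum_ite_eq (Finset.range (n/2+1)) b]
  simp [Nat.lt_succ_iff]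

lemma key (d m : ℕ) :
    6 * (m:ℚ) * (Ppoly d d).coeff m + 2 * ((m:ℚ)+1) * (Ppoly d d).coeff (m+1)
      = 3 * (d:ℚ) * (Ppoly d d).coeff m + (4*(d:ℚ)+2) * (Ppoly d d).coeff (m+1)
        - ((d:ℚ)+1) * (Ppoly (d+1) (d+1)).coeff (m+1) := by
  rw [coeff_Ppoly, coeff_Ppoly, coeff_Ppoly]
  by_cases h1 : 2*(m+1) ≤ d
  · -- main case
    obtain ⟨c, rfl⟩ : ∃ c, d = 2*m+2+c := ⟨d - (2*m+2), by omega⟩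
    rw [if_pos (by omega : m ≤ (2*m+2+c)/2), if_pos (by omega : m+1 ≤ (2*m+2+c)/2),
        if_pos (by omega : m+1 ≤ (2*m+2+c+1)/2)]
    rw [show 2*m+2+c - 2*m = c+2 by omega, show 2*m+2+c - 2*(m+1) = c by omega,
        show 2*m+2+c+1 - 2*(m+1) = c+1 by omega]
    rw [mult3_cast, mult3_cast, mult3_cast]
    have e1 : (2*m+2+c + m + (c+2)).factorial
        = (3*m+2*c+4) * (3*m+2*c+3).factorial := by
      rw [show 2*m+2+c + m + (c+2) = (3*m+2*c+3)+1 by ring, Nat.factorial_succ]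
    have e2 : (2*m+2+c + (m+1) + c).factorial = (3*m+2*c+3).factorial := by
      rw [show 2*m+2+c + (m+1) + c = 3*m+2*c+3 by ring]
    have e3 : (2*m+2+c+1 + (m+1) + (c+1)).factorial
        = (3*m+2*c+5) * ((3*m+2*c+4) * (3*m+2*c+3).factorial) := by
      rw [show 2*m+2+c+1 + (m+1) + (c+1) = (3*m+2*c+3)+1+1 by ring,
          Nat.factorial_succ, Nat.factorial_succ]
    have e4 : (2*m+2+c+1).factorial = (2*m+2+c+1) * (2*m+2+c).factorial :=
      Nat.factorial_succ _
    have e5 : (m+1).factorial = (m+1) * m.factorial := Nat.factorial_succ _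
    have e6 : (c+2).factorial = (c+2) * ((c+1) * c.factorial) := by
      rw [show c+2 = (c+1)+1 by omega, Nat.factorial_succ, Nat.factorial_succ]
    have e7 : (c+1).factorial = (c+1) * c.factorial := Nat.factorial_succ _
    rw [e1, e2, e3, e4, e5, e6, e7]
    have h1 : ((3*m+2*c+3).factorial : ℚ) ≠ 0 := by positivity
    have h2 : ((2*m+2+c).factorial : ℚ) ≠ 0 := by positivity
    have h3 : ((m).factorial : ℚ) ≠ 0 := by positivity
    have h4 : ((c).factorial : ℚ) ≠ 0 := by positivity
    push_cast
    field_simp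
    ring
  · have h2 : d = 2*m+1 ∨ d = 2*m ∨ d < 2*m := by omega
    rcases h2 with rfl | rfl | h3
    · -- odd boundary
      rw [if_pos (by omega : m ≤ (2*m+1)/2), if_neg (by omega : ¬ (m+1 ≤ (2*m+1)/2)),
          if_pos (by omega : m+1 ≤ (2*m+1+1)/2)]
      rw [show 2*m+1 - 2*m = 1 by omega, show 2*m+1+1 - 2*(m+1) = 0 by omega]
      rw [mult3_cast, mult3_cast]
      have e1 : (2*m+1 + m + 1).factorial = (3*m+2) * ((3*m+1) * (3*m).factorial) := by
        rw [show 2*m+1 + m + 1 = (3*m)+1+1 by ring, Nat.factorial_succ, Nat.factorial_succ]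
      have e2 : (2*m+1+1 + (m+1) + 0).factorial
          = (3*m+3) * ((3*m+2) * ((3*m+1) * (3*m).factorial)) := by
        rw [show 2*m+1+1 + (m+1) + 0 = (3*m)+1+1+1 by ring,
            Nat.factorial_succ, Nat.factorial_succ, Nat.factorial_succ]
      have e3 : (2*m+1+1).factorial = (2*m+2) * ((2*m+1) * (2*m).factorial) := by
        rw [show 2*m+1+1 = (2*m)+1+1 by ring, Nat.factorial_succ, Nat.factorial_succ]
      have e4 : (2*m+1).factorial = (2*m+1) * (2*m).factorial := Nat.factorial_succ _
      have e5 : (m+1).factorial = (m+1) * m.factorial := Nat.factorial_succ _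
      rw [e1, e2, e3, e4, e5]
      have h1 : ((3*m).factorial : ℚ) ≠ 0 := by positivity
      have h2 : ((2*m).factorial : ℚ) ≠ 0 := by positivity
      have h3 : ((m).factorial : ℚ) ≠ 0 := by positivity
      push_cast
      field_simp
      ring
    · -- even boundary
      rw [if_pos (by omega : m ≤ (2*m)/2), if_neg (by omega : ¬ (m+1 ≤ (2*m)/2)),
          if_neg (by omega : ¬ (m+1 ≤ (2*m+1)/2))]
      push_cast
      ring
    · -- all zero
      rw [if_neg (by omega : ¬ (m ≤ d/2)), if_neg (by omega : ¬ (m+1 ≤ d/2)),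
          if_neg (by omega : ¬ (m+1 ≤ (d+1)/2))]
      ring

lemma key0 (d : ℕ) :
    (4*(d:ℚ)+2) * (Ppoly d d).coeff 0 = ((d:ℚ)+1) * (Ppoly (d+1) (d+1)).coeff 0 := by
  rw [coeff_Ppoly, coeff_Ppoly, if_pos (by omega : 0 ≤ d/2), if_pos (by omega : 0 ≤ (d+1)/2)]
  rw [show d - 2*0 = d by omega, show d+1 - 2*0 = d+1 by omega]
  rw [mult3_cast, mult3_cast]
  have e1 : (d + 0 + d).factorial = (2*d).factorial := by rw [show d+0+d = 2*d by ring]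
  have e2 : (d+1 + 0 + (d+1)).factorial
      = (2*d+2) * ((2*d+1) * (2*d).factorial) := by
    rw [show d+1+0+(d+1) = (2*d)+1+1 by ring, Nat.factorial_succ, Nat.factorial_succ]
  have e3 : (d+1).factorial = (d+1) * d.factorial := Nat.factorial_succ _
  rw [e1, e2, e3, Nat.factorial_zero]
  have h1 : ((2*d).factorial : ℚ) ≠ 0 := by positivity
  have h2 : ((d).factorial : ℚ) ≠ 0 := by positivity
  push_cast
  field_simp
  ring

theorem stmt2 (d : ℕ) :
    C 2 * X * (C 3 * X + 1) * derivative (Ppoly d d) =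
      (C (3 * (d : ℚ)) * X + C (4 * (d : ℚ) + 2)) * Ppoly d d
        - C ((d : ℚ) + 1) * Ppoly (d + 1) (d + 1) := by
  set p := Ppoly d d
  set q := Ppoly (d+1) (d+1)
  have hC6 : (C 6 : ℚ[X]) = C 2 * C 3 := by rw [← C_mul]; norm_num
  have hL : C 2 * X * (C 3 * X + 1) * derivative p
      = C 6 * (X * (X * derivative p)) + C 2 * (X * derivative p) := by
    rw [hC6]; ring
  have hR : (C (3 * (d : ℚ)) * X + C (4 * (d : ℚ) + 2)) * p - C ((d : ℚ) + 1) * q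
      = C (3 * (d : ℚ)) * (X * p) + C (4 * (d : ℚ) + 2) * p - C ((d : ℚ) + 1) * q := by
    ring
  rw [hL, hR]
  ext m
  rcases m with _ | m
  · simp only [coeff_add, coeff_sub, coeff_C_mul, mul_coeff_zero, coeff_X_zero,
      zero_mul, mul_zero, add_zero, zero_add, zero_sub, coeff_C_zero]
    have := key0 d
    linarith [key0 d]
  · rcases m with _ | m
    · simp only [coeff_add, coeff_sub, coeff_C_mul, coeff_X_mul, mul_coeff_zero,
        coeff_X_zero, zero_mul, coeff_derivative]
      have := key d 0
      push_cast at this ⊢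
      linarith
    · simp only [coeff_add, coeff_sub, coeff_C_mul, coeff_X_mul, coeff_derivative]
      have := key d (m+1)
      push_cast at this ⊢
      linarith
end

section
/- Let d, e \geq 1 and let u_{0,0}, \ldots, u_{0,e-1} be indeterminates. Let U_0(Y) = \sum_{j=0}^{e-1} u_{0,j} Y^{j+2} and let I_0(Y) be the compositional inverse of Y + U_0(Y) in \mathbb{Q}[u_{0,0},\ldots,u_{0,e-1}][[Y]]. Write U_0(I_0(Y)) = \sum_{j \geq 0} v_{0,j} Y^{j+2}. Then for every j \geq 0, v_{0,j} = -\frac{1}{j+2} \sum_{\mathbf{a} \cdot \mathbb{N} = j+1} (-1)^{|\mathbf{a}|} \binom{|\mathbf{a}| + j + 1}{\mathbf{a}, j+1} u_{0,0}^{a_1} \cdots u_{0,e-1}^{a_e}, where the sum runs over tuples \mathbf{a} = (a_1,\ldots,a_e) of nonnegative integers with a_1 + 2a_2 + \cdots + e a_e = j+1. -/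
open PowerSeries

/-- Composition `f(g(Y))` of formal power series, valid when `g` has zero constant term. -/
noncomputable def psComp {A : Type*} [CommRing A] (f g : PowerSeries A) : PowerSeries A :=
  PowerSeries.mk fun n => ∑ k ∈ Finset.range (n + 1), coeff k f * coeff n (g ^ k)

/-- The multinomial coefficient `(∑ aᵢ + s)! / (∏ aᵢ! * s!)`. -/
def multinom {m : ℕ} (a : Fin m → ℕ) (s : ℕ) : ℕ :=
  (∑ i, a i + s).factorial / ((∏ i, (a i).factorial) * s.factorial)

namespace Stmt18Aux

open Finset PowerSeries

variable {A : Type*} [CommRing A]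

lemma coeff_psComp (f g : PowerSeries A) (n : ℕ) :
    coeff n (psComp f g) = ∑ k ∈ range (n + 1), coeff k f * coeff n (g ^ k) := by
  simp [psComp]

lemma coeff_pow_of_lt {g : PowerSeries A} (hg : constantCoeff g = 0)
    {n k : ℕ} (h : n < k) : coeff n (g ^ k) = 0 := by
  obtain ⟨g', rfl⟩ := X_dvd_iff.2 hg
  rw [mul_pow, coeff_X_pow_mul', if_neg (by omega)]

lemma coeff_psComp_mul {g : PowerSeries A} (hg : constantCoeff g = 0)
    (f G : PowerSeries A) (n : ℕ) :
    coeff n (psComp f g * G)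
      = ∑ k ∈ range (n + 1), coeff k f * coeff n (g ^ k * G) := by
  rw [coeff_mul]
  have step : ∀ p ∈ antidiagonal n,
      coeff p.1 (psComp f g) * coeff p.2 G
        = ∑ k ∈ range (n + 1), coeff k f * (coeff p.1 (g ^ k) * coeff p.2 G) := by
    intro p hp
    have hp1 : p.1 ≤ n := by
      have := Finset.HasAntidiagonal.mem_antidiagonal.1 hp; omega
    rw [coeff_psComp]
    have hext : (∑ k ∈ range (p.1 + 1), coeff k f * coeff p.1 (g ^ k))
        = ∑ k ∈ range (n + 1), coeff k f * coeff p.1 (g ^ k) := by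
      refine Finset.sum_subset (Finset.range_subset_range.2 (by omega)) fun k _ hk => ?_
      rw [coeff_pow_of_lt hg (by simp only [mem_range] at hk ⊢; omega), mul_zero]
    rw [hext, Finset.sum_mul]
    simp [mul_assoc]
  rw [Finset.sum_congr rfl step, Finset.sum_comm]
  refine Finset.sum_congr rfl fun k _ => ?_
  rw [← Finset.mul_sum, coeff_mul]

lemma psComp_add_left (f₁ f₂ g : PowerSeries A) :
    psComp (f₁ + f₂) g = psComp f₁ g + psComp f₂ g := by
  ext n
  simp [coeff_psComp, add_mul, Finset.sum_add_distrib]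

lemma psComp_neg_left (f g : PowerSeries A) :
    psComp (-f) g = -psComp f g := by
  ext n
  simp [coeff_psComp, Finset.sum_neg_distrib]

lemma psComp_one (g : PowerSeries A) : psComp 1 g = 1 := by
  ext n
  rw [coeff_psComp, Finset.sum_eq_single 0]
  · simp
  · intro k _ hk
    simp [coeff_one, hk]
  · simp

lemma psComp_X_right (f : PowerSeries A) : psComp f X = f := by
  ext n
  rw [coeff_psComp, Finset.sum_eq_single n]
  · simp [coeff_X_pow]
  · intro k _ hk
    rw [coeff_X_pow, if_neg (fun h => hk h.symm), mul_zero]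
  · intro hn
    exact absurd (self_mem_range_succ n) hn

lemma psComp_X_left {g : PowerSeries A} (hg : constantCoeff g = 0) : psComp X g = g := by
  ext n
  rw [coeff_psComp]
  rcases Nat.eq_zero_or_pos n with rfl | hn
  · simp [coeff_zero_eq_constantCoeff, hg]
  · rw [Finset.sum_eq_single 1]
    · simp
    · intro k _ hk
      rw [coeff_X, if_neg hk, zero_mul]
    · intro h1
      exact absurd (mem_range.2 (by omega)) h1

lemma constantCoeff_psComp (f g : PowerSeries A) :
    constantCoeff (psComp f g) = constantCoeff f := by
  have := coeff_psComp f g 0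
  simp only [range_one, sum_singleton, pow_zero, coeff_zero_eq_constantCoeff, map_one,
    mul_one] at this
  simpa [coeff_zero_eq_constantCoeff] using this

lemma psComp_mul {g : PowerSeries A} (hg : constantCoeff g = 0) (f₁ f₂ : PowerSeries A) :
    psComp (f₁ * f₂) g = psComp f₁ g * psComp f₂ g := by
  ext n
  have hRHS : coeff n (psComp f₁ g * psComp f₂ g)
      = ∑ k ∈ range (n + 1), ∑ m ∈ range (n + 1),
          coeff k f₁ * (coeff m f₂ * coeff n (g ^ (m + k))) := by
    rw [coeff_psComp_mul hg]
    refine Finset.sum_congr rfl fun k _ => ?_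
    rw [mul_comm (g ^ k), coeff_psComp_mul hg, Finset.mul_sum]
    refine Finset.sum_congr rfl fun m _ => ?_
    rw [← pow_add]
  have hdisj : (↑(range (n + 1)) : Set ℕ).PairwiseDisjoint (fun t => antidiagonal t) :=
    fun a _ b _ hab => Finset.disjoint_left.2 fun p hp hp' =>
      hab (by rw [← Finset.HasAntidiagonal.mem_antidiagonal.1 hp, ← Finset.HasAntidiagonal.mem_antidiagonal.1 hp'])
  have hset : (range (n + 1)).biUnion (fun t => antidiagonal t)
      = (range (n + 1) ×ˢ range (n + 1)).filter (fun p => p.1 + p.2 ≤ n) := by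
    ext p
    simp only [Finset.mem_biUnion, Finset.HasAntidiagonal.mem_antidiagonal, mem_range, mem_filter,
      mem_product]
    constructor
    · rintro ⟨t, ht, rfl⟩; omega
    · rintro ⟨⟨_, _⟩, hle⟩; exact ⟨p.1 + p.2, by omega, rfl⟩
  have hLHS : coeff n (psComp (f₁ * f₂) g)
      = ∑ p ∈ (range (n + 1)).biUnion (fun t => antidiagonal t),
          coeff p.1 f₁ * (coeff p.2 f₂ * coeff n (g ^ (p.2 + p.1))) := by
    rw [coeff_psComp, Finset.sum_biUnion hdisj]
    refine Finset.sum_congr rfl fun k _ => ?_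
    rw [coeff_mul, Finset.sum_mul]
    refine Finset.sum_congr rfl fun p hp => ?_
    have hpk := Finset.HasAntidiagonal.mem_antidiagonal.1 hp
    rw [show p.2 + p.1 = k by omega]
    ring
  rw [hRHS, hLHS, hset]
  rw [Finset.sum_filter_of_ne (fun p hp hne => ?_), Finset.sum_product]
  by_contra hgt
  exact hne (by rw [coeff_pow_of_lt hg (by omega), mul_zero, mul_zero])

lemma psComp_pow {g : PowerSeries A} (hg : constantCoeff g = 0) (f : PowerSeries A) (k : ℕ) :
    psComp (f ^ k) g = psComp f g ^ k := by
  induction k with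
  | zero => simpa using psComp_one g
  | succ k ih => rw [pow_succ, pow_succ, psComp_mul hg, ih]

lemma psComp_assoc {g h : PowerSeries A} (hg : constantCoeff g = 0)
    (hh : constantCoeff h = 0) (f : PowerSeries A) :
    psComp (psComp f g) h = psComp f (psComp g h) := by
  ext n
  rw [coeff_psComp, coeff_psComp]
  have hpow : ∀ m : ℕ, coeff n (psComp g h ^ m) = coeff n (psComp (g ^ m) h) := by
    intro m; rw [psComp_pow hh]
  calc ∑ k ∈ range (n + 1), coeff k (psComp f g) * coeff n (h ^ k)
      = ∑ k ∈ range (n + 1), ∑ m ∈ range (n + 1),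
          coeff m f * coeff k (g ^ m) * coeff n (h ^ k) := by
        refine Finset.sum_congr rfl fun k hk => ?_
        rw [coeff_psComp]
        have hext : (∑ m ∈ range (k + 1), coeff m f * coeff k (g ^ m))
            = ∑ m ∈ range (n + 1), coeff m f * coeff k (g ^ m) := by
          refine Finset.sum_subset (Finset.range_subset_range.2 (by
            simp only [mem_range] at hk; omega)) fun m _ hm => ?_
          rw [coeff_pow_of_lt hg (by simp only [mem_range] at hm hk ⊢; omega), mul_zero]
        rw [hext, Finset.sum_mul]
    _ = ∑ m ∈ range (n + 1), coeff m f * coeff n (psComp g h ^ m) := by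
        rw [Finset.sum_comm]
        refine Finset.sum_congr rfl fun m _ => ?_
        rw [hpow, coeff_psComp, Finset.mul_sum]
        exact Finset.sum_congr rfl fun k _ => by ring


lemma derivative_psComp {g : PowerSeries A} (hg : constantCoeff g = 0) (f : PowerSeries A) :
    d⁄dX A (psComp f g) = psComp (d⁄dX A f) g * d⁄dX A g := by
  ext n
  have key : ∀ k : ℕ, ((k : A) + 1) * coeff n (g ^ k * d⁄dX A g)
      = coeff (n + 1) (g ^ (k + 1)) * ((n : A) + 1) := by
    intro k
    have hpow : d⁄dX A (g ^ (k + 1)) = (k + 1) • (g ^ k * d⁄dX A g) := by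
      rw [Derivation.leibniz_pow, Nat.add_sub_cancel, smul_eq_mul]
    have h2 := congrArg (coeff n) hpow
    rw [coeff_derivative, map_nsmul, nsmul_eq_mul] at h2
    push_cast at h2 ⊢
    linear_combination -h2
  rw [coeff_derivative, coeff_psComp, coeff_psComp_mul hg,
    Finset.sum_range_succ' (fun k => coeff k f * coeff (n + 1) (g ^ k)) (n + 1)]
  have h0 : coeff 0 f * coeff (n + 1) (g ^ 0) = 0 := by
    simp [coeff_one]
  rw [h0, add_zero, Finset.sum_mul]
  refine Finset.sum_congr rfl fun k _ => ?_
  rw [coeff_derivative]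
  push_cast
  linear_combination (-(coeff (k + 1) f)) * key k

lemma coeff_pow_congr {g h : PowerSeries A} (hg0 : constantCoeff g = 0)
    (hh0 : constantCoeff h = 0) {n : ℕ} (hag : ∀ m, m < n → coeff m g = coeff m h) :
    ∀ k b, 1 ≤ k → b ≤ n → (b < n ∨ 2 ≤ k) → coeff b (g ^ k) = coeff b (h ^ k) := by
  intro k
  induction k with
  | zero => intro b hk; omega
  | succ k ih =>
    intro b _ hb hcase
    rcases Nat.eq_zero_or_pos k with rfl | hk1
    · rw [pow_one, pow_one]
      exact hag b (by omega)
    · rw [pow_succ, pow_succ, coeff_mul, coeff_mul]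
      refine Finset.sum_congr rfl fun p hp => ?_
      have hps := Finset.HasAntidiagonal.mem_antidiagonal.1 hp
      rcases Nat.eq_zero_or_pos p.1 with h1 | h1
      · have hzg : coeff p.1 (g ^ k) = 0 := by
          rw [h1, coeff_zero_eq_constantCoeff, map_pow, hg0, zero_pow (by omega)]
        have hzh : coeff p.1 (h ^ k) = 0 := by
          rw [h1, coeff_zero_eq_constantCoeff, map_pow, hh0, zero_pow (by omega)]
        rw [hzg, hzh, zero_mul, zero_mul]
      · rcases Nat.eq_zero_or_pos p.2 with h2 | h2
        · have hzg : coeff p.2 g = 0 := by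
            rw [h2, coeff_zero_eq_constantCoeff, hg0]
          have hzh : coeff p.2 h = 0 := by
            rw [h2, coeff_zero_eq_constantCoeff, hh0]
          rw [hzg, hzh, mul_zero, mul_zero]
        · have e1 : coeff p.1 (g ^ k) = coeff p.1 (h ^ k) :=
            ih p.1 (by omega) (by omega) (Or.inl (by omega))
          have e2 : coeff p.2 g = coeff p.2 h := hag _ (by omega)
          rw [e1, e2]

lemma psComp_cancel {u g h : PowerSeries A} (hu0 : constantCoeff u = 0)
    (hu1 : coeff 1 u = 0) (hg0 : constantCoeff g = 0) (hh0 : constantCoeff h = 0)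
    (heq : psComp (X + u) g = psComp (X + u) h) : g = h := by
  have hcu0 : coeff 0 u = 0 := by rw [coeff_zero_eq_constantCoeff]; exact hu0
  ext n
  induction n using Nat.strong_induction_on with
  | _ n ih =>
    rcases Nat.eq_zero_or_pos n with rfl | hn
    · simp only [coeff_zero_eq_constantCoeff]
      rw [hg0, hh0]
    · have hc := congrArg (coeff n) heq
      rw [coeff_psComp, coeff_psComp] at hc
      have hsplit : ∀ w : PowerSeries A,
          (∑ k ∈ range (n + 1), coeff k (X + u) * coeff n (w ^ k))
          = coeff n w + ∑ k ∈ range (n + 1), coeff k u * coeff n (w ^ k) := by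
        intro w
        simp only [map_add, add_mul, Finset.sum_add_distrib]
        congr 1
        rw [Finset.sum_eq_single 1]
        · simp
        · intro k _ hk
          rw [coeff_X, if_neg hk, zero_mul]
        · intro h1
          exact absurd (mem_range.2 (by omega)) h1
      rw [hsplit g, hsplit h] at hc
      have hsum : ∑ k ∈ range (n + 1), coeff k u * coeff n (g ^ k)
          = ∑ k ∈ range (n + 1), coeff k u * coeff n (h ^ k) := by
        refine Finset.sum_congr rfl fun k _ => ?_
        match k with
        | 0 => rw [hcu0, zero_mul, zero_mul]
        | 1 => rw [hu1, zero_mul, zero_mul]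
        | (k + 2) =>
          rw [coeff_pow_congr hg0 hh0 (fun m hm => ih m hm) (k + 2) n (by omega) le_rfl
            (Or.inr (by omega))]
      rw [hsum] at hc
      exact add_right_cancel hc


noncomputable section Concrete

abbrev Rg (e : ℕ) : Type := MvPolynomial (Fin e) ℚ

variable (e : ℕ)

def UU : PowerSeries (Rg e) := ∑ s : Fin e, (monomial ((s : ℕ) + 2)) (MvPolynomial.X s)

def VV : PowerSeries (Rg e) := ∑ s : Fin e, (monomial ((s : ℕ) + 1)) (MvPolynomial.X s)

def FF : PowerSeries (Rg e) := X + UU e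

def WW : PowerSeries (Rg e) := invOfUnit (1 + VV e) 1

lemma coeff_UU (m : ℕ) : coeff m (UU e)
    = ∑ s : Fin e, if m = (s : ℕ) + 2 then MvPolynomial.X s else 0 := by
  simp [UU, coeff_monomial]

lemma coeff_VV (m : ℕ) : coeff m (VV e)
    = ∑ s : Fin e, if m = (s : ℕ) + 1 then MvPolynomial.X s else 0 := by
  simp [VV, coeff_monomial]

lemma hU0 : constantCoeff (UU e) = 0 := by
  rw [← coeff_zero_eq_constantCoeff_apply, coeff_UU]
  exact Finset.sum_eq_zero fun s _ => if_neg (by omega)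

lemma hU1 : coeff 1 (UU e) = 0 := by
  rw [coeff_UU]
  exact Finset.sum_eq_zero fun s _ => if_neg (by omega)

lemma hV0 : constantCoeff (VV e) = 0 := by
  rw [← coeff_zero_eq_constantCoeff_apply, coeff_VV]
  exact Finset.sum_eq_zero fun s _ => if_neg (by omega)

lemma hF0 : constantCoeff (FF e) = 0 := by
  rw [FF, map_add, constantCoeff_X, hU0, add_zero]

lemma hF1 : coeff 1 (FF e) = 1 := by
  rw [FF, map_add, hU1, coeff_X, if_pos rfl, add_zero]

lemma hW : (1 + VV e) * WW e = 1 := by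
  refine mul_invOfUnit _ _ ?_
  rw [map_add, hV0, map_one, add_zero, Units.val_one]

lemma hW0 : constantCoeff (WW e) = 1 := by
  rw [WW, constantCoeff_invOfUnit]
  simp

lemma ps_monomial_eq (nn : ℕ) (a : Rg e) :
    (monomial nn) a = C a * X ^ nn := by
  ext m
  rw [coeff_monomial, coeff_C_mul, coeff_X_pow]
  split_ifs <;> simp

lemma hFX : FF e = X * (1 + VV e) := by
  rw [FF, mul_add, mul_one]
  congr 1
  rw [VV, UU, Finset.mul_sum]
  refine Finset.sum_congr rfl fun s _ => ?_
  rw [ps_monomial_eq, ps_monomial_eq]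
  ring

lemma hDF : d⁄dX (Rg e) (FF e) = (1 + VV e) + X * d⁄dX (Rg e) (VV e) := by
  rw [hFX, Derivation.leibniz, smul_eq_mul, smul_eq_mul, derivative_X, mul_one, map_add,
    Derivation.map_one_eq_zero, zero_add, add_comm]

lemma hDW : d⁄dX (Rg e) (WW e) = -(WW e ^ 2 * d⁄dX (Rg e) (VV e)) := by
  have h := congrArg (d⁄dX (Rg e)) (hW e)
  rw [Derivation.leibniz, smul_eq_mul, smul_eq_mul, Derivation.map_one_eq_zero, map_add,
    Derivation.map_one_eq_zero, zero_add] at h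
  -- h : (1 + V) * D W + W * D V = 0
  calc d⁄dX (Rg e) (WW e)
      = (WW e * (1 + VV e)) * d⁄dX (Rg e) (WW e) := by rw [mul_comm (WW e), hW e, one_mul]
    _ = WW e * ((1 + VV e) * d⁄dX (Rg e) (WW e)) := by ring
    _ = WW e * (-(WW e * d⁄dX (Rg e) (VV e))) := by
        rw [show (1 + VV e) * d⁄dX (Rg e) (WW e) = -(WW e * d⁄dX (Rg e) (VV e)) from by
          linear_combination h]
    _ = -(WW e ^ 2 * d⁄dX (Rg e) (VV e)) := by ring

lemma star {m : ℕ} (hm : 1 ≤ m) :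
    (m : PowerSeries (Rg e)) * (d⁄dX (Rg e) (FF e) * WW e ^ (m + 1))
      = (m : PowerSeries (Rg e)) * WW e ^ m - X * d⁄dX (Rg e) (WW e ^ m) := by
  have h1V : (1 + VV e) * WW e ^ (m + 1) = WW e ^ m := by
    rw [pow_succ', ← mul_assoc, hW e, one_mul]
  have hpow : WW e ^ (m - 1) * WW e ^ 2 = WW e ^ (m + 1) := by
    rw [← pow_add]; congr 1; omega
  have hdwm : d⁄dX (Rg e) (WW e ^ m)
      = -((m : PowerSeries (Rg e)) * (WW e ^ (m + 1) * d⁄dX (Rg e) (VV e))) := by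
    rw [Derivation.leibniz_pow, hDW e, smul_eq_mul, nsmul_eq_mul,
      show WW e ^ (m - 1) * -(WW e ^ 2 * d⁄dX (Rg e) (VV e))
        = -(WW e ^ (m + 1) * d⁄dX (Rg e) (VV e)) from by rw [← hpow]; ring]
    ring
  rw [hDF e, hdwm]
  calc (m : PowerSeries (Rg e)) * (((1 + VV e) + X * d⁄dX (Rg e) (VV e)) * WW e ^ (m + 1))
      = (m : PowerSeries (Rg e)) * ((1 + VV e) * WW e ^ (m + 1))
        + (m : PowerSeries (Rg e)) * (X * (WW e ^ (m + 1) * d⁄dX (Rg e) (VV e))) := by ring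
    _ = _ := by rw [h1V]; ring

lemma core (N : ℕ) {m : ℕ} (hm : m ≤ N) :
    coeff N (FF e ^ m * (d⁄dX (Rg e) (FF e) * WW e ^ (N + 1)))
      = if m = N then 1 else 0 := by
  have h2 : (1 + VV e) ^ m * WW e ^ m = 1 := by rw [← mul_pow, hW e, one_pow]
  have h3 : WW e ^ (N + 1) = WW e ^ m * WW e ^ (N - m + 1) := by
    rw [← pow_add]; congr 1; omega
  have hsplit : FF e ^ m * (d⁄dX (Rg e) (FF e) * WW e ^ (N + 1))
      = X ^ m * (d⁄dX (Rg e) (FF e) * WW e ^ (N - m + 1)) := by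
    calc FF e ^ m * (d⁄dX (Rg e) (FF e) * WW e ^ (N + 1))
        = ((1 + VV e) ^ m * WW e ^ m)
            * (X ^ m * (d⁄dX (Rg e) (FF e) * WW e ^ (N - m + 1))) := by
          rw [hFX e, mul_pow, h3]; ring
      _ = _ := by rw [h2, one_mul]
  rw [hsplit, coeff_X_pow_mul', if_pos hm]
  have hDF0 : constantCoeff (d⁄dX (Rg e) (FF e)) = 1 := by
    rw [← coeff_zero_eq_constantCoeff_apply, coeff_derivative, hF1 e]
    simp
  rcases eq_or_lt_of_le hm with rfl | hlt
  · rw [if_pos rfl, Nat.sub_self, pow_one, coeff_zero_eq_constantCoeff_apply, map_mul,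
      hDF0, hW0, mul_one]
  · rw [if_neg (by omega)]
    obtain ⟨t, ht⟩ : ∃ t, N - m = t + 1 := ⟨N - m - 1, by omega⟩
    rw [ht]
    have hstar := star e (m := t + 1) (by omega)
    have hc := congrArg (coeff (t + 1)) hstar
    have hcast : ((t + 1 : ℕ) : PowerSeries (Rg e)) = C ((t + 1 : ℕ) : Rg e) := by
      rw [map_natCast]
    rw [hcast, map_sub, coeff_C_mul, coeff_C_mul, coeff_succ_X_mul, coeff_derivative] at hc
    -- hc : (t+1 : R) * coeff (t+1) (DF * W^(t+2)) = (t+1) * coeff (t+1) (W^(t+1))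
    --        - coeff (t+1) (W^(t+1)) * (t+1)
    have hzero : ((t + 1 : ℕ) : Rg e)
        * coeff (t + 1) (d⁄dX (Rg e) (FF e) * WW e ^ (t + 1 + 1)) = 0 := by
      push_cast at hc ⊢
      linear_combination hc
    have hne : ((t + 1 : ℕ) : Rg e) ≠ 0 := Nat.cast_ne_zero.2 (by omega)
    exact (mul_eq_zero.1 hzero).resolve_left hne

lemma changevar (N : ℕ) (h : PowerSeries (Rg e)) :
    coeff N (psComp h (FF e) * (d⁄dX (Rg e) (FF e) * WW e ^ (N + 1)))
      = coeff N h := by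
  rw [coeff_psComp_mul (hF0 e)]
  rw [Finset.sum_congr rfl (fun k hk => by
    rw [core e N (by simp only [mem_range] at hk; omega)])]
  simp [mul_ite, Finset.sum_ite_eq']

end Concrete


lemma multinom_eq {m : ℕ} (a : Fin m → ℕ) (s : ℕ) :
    multinom a s = Nat.choose (∑ i, a i + s) s * Nat.multinomial Finset.univ a := by
  have h1 := Nat.multinomial_spec Finset.univ a
  have h2 := Nat.choose_mul_factorial_mul_factorial (Nat.le_add_left s (∑ i, a i))
  rw [Nat.add_sub_cancel] at h2
  have hb : 0 < (∏ i, (a i).factorial) * s.factorial :=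
    Nat.mul_pos (Finset.prod_pos fun i _ => Nat.factorial_pos _) (Nat.factorial_pos _)
  have hfull : (∑ i, a i + s).factorial
      = ((∏ i, (a i).factorial) * s.factorial)
        * (Nat.choose (∑ i, a i + s) s * Nat.multinomial Finset.univ a) := by
    calc (∑ i, a i + s).factorial
        = Nat.choose (∑ i, a i + s) s * s.factorial * (∑ i, a i).factorial := h2.symm
      _ = Nat.choose (∑ i, a i + s) s * s.factorial
            * ((∏ i, (a i).factorial) * Nat.multinomial Finset.univ a) := by rw [h1]
      _ = (∏ i, (a i).factorial) * s.factorial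
            * (Nat.choose (∑ i, a i + s) s * Nat.multinomial Finset.univ a) := by ring
  rw [multinom, hfull, Nat.mul_div_cancel_left _ hb]

end Stmt18Aux

set_option maxHeartbeats 2000000 in
/-- With `U₀(Y) = ∑_{j=0}^{e-1} u_{0,j} Y^{j+2}` and `I₀` the compositional inverse of
`Y + U₀(Y)`, writing `U₀(I₀(Y)) = ∑_{j≥0} v_{0,j} Y^{j+2}`, we have
`v_{0,j} = -(1/(j+2)) ∑_{a·ℕ = j+1} (-1)^{|a|} (|a|+j+1 choose a, j+1) u_{0,0}^{a₁} ⋯ u_{0,e-1}^{a_e}`. -/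
theorem stmt18 (d e : ℕ) (hd : 1 ≤ d) (he : 1 ≤ e)
    (I₀ : PowerSeries (MvPolynomial (Fin e) ℚ))
    (hinv : psComp (PowerSeries.X + ∑ j : Fin e,
        (PowerSeries.monomial ((j : ℕ) + 2)) (MvPolynomial.X j)) I₀ = PowerSeries.X)
    (j : ℕ) :
    PowerSeries.coeff (j + 2)
        (psComp (∑ j : Fin e,
          (PowerSeries.monomial ((j : ℕ) + 2)) (MvPolynomial.X j)) I₀) =
      (-(1 / ((j : ℚ) + 2))) •
        Finset.sum
          ((Fintype.piFinset fun _ : Fin e => Finset.range (j + 2)).filter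
            (fun a : Fin e → ℕ => ∑ s : Fin e, ((s : ℕ) + 1) * a s = j + 1))
          (fun a : Fin e → ℕ =>
            (-1 : MvPolynomial (Fin e) ℚ) ^ (∑ s, a s) * (multinom a (j + 1) :
                MvPolynomial (Fin e) ℚ) *
              ∏ s : Fin e, (MvPolynomial.X s : MvPolynomial (Fin e) ℚ) ^ a s) := by
  classical
  obtain ⟨e', rfl⟩ : ∃ e', e = e' + 1 := ⟨e - 1, by omega⟩
  have hFinv : psComp (Stmt18Aux.FF (e' + 1)) I₀ = PowerSeries.X := by
    rw [Stmt18Aux.FF, Stmt18Aux.UU]; exact hinv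
  -- coefficient 1 of I₀
  have h1 := congrArg (PowerSeries.coeff 1) hFinv
  rw [Stmt18Aux.coeff_psComp, Finset.sum_range_succ, Finset.sum_range_one, pow_zero, pow_one,
    Stmt18Aux.hF1, one_mul, PowerSeries.coeff_one, if_neg one_ne_zero, mul_zero, zero_add,
    PowerSeries.coeff_X, if_pos rfl] at h1
  -- coefficient 2 of I₀
  have hC2F : PowerSeries.coeff 2 (Stmt18Aux.FF (e' + 1)) = MvPolynomial.X 0 := by
    rw [Stmt18Aux.FF, map_add, PowerSeries.coeff_X, if_neg (by omega), zero_add,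
      Stmt18Aux.coeff_UU, Finset.sum_eq_single (0 : Fin (e' + 1))]
    · simp
    · intro s _ hs
      refine if_neg fun hcon => hs ?_
      have hs0 : (s : ℕ) = 0 := by omega
      exact Fin.ext (by simp [hs0])
    · intro hmem
      exact absurd (Finset.mem_univ _) hmem
  have hsq : PowerSeries.coeff 2 (I₀ ^ 2)
      = PowerSeries.coeff 0 I₀ * PowerSeries.coeff 2 I₀
        + PowerSeries.coeff 1 I₀ * PowerSeries.coeff 1 I₀
        + PowerSeries.coeff 2 I₀ * PowerSeries.coeff 0 I₀ := by
    rw [pow_two, PowerSeries.coeff_mul, Finset.Nat.sum_antidiagonal_eq_sum_range_succ_mk,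
      Finset.sum_range_succ, Finset.sum_range_succ, Finset.sum_range_one]
  have h2 := congrArg (PowerSeries.coeff 2) hFinv
  rw [Stmt18Aux.coeff_psComp, Finset.sum_range_succ, Finset.sum_range_succ,
    Finset.sum_range_one, pow_zero, pow_one, Stmt18Aux.hF1, one_mul, hC2F, hsq,
    PowerSeries.coeff_one, if_neg (by omega), mul_zero, zero_add,
    PowerSeries.coeff_X, if_neg (by omega)] at h2
  -- h2 : c₂ + X0 * (c₀c₂ + c₁c₁ + c₂c₀) = 0, h1 : c₁ = 1
  have E : PowerSeries.coeff 2 I₀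
      * (1 + 2 * MvPolynomial.X 0 * PowerSeries.coeff 0 I₀) = -(MvPolynomial.X 0) := by
    linear_combination h2 - MvPolynomial.X 0 * (PowerSeries.coeff 1 I₀ + 1) * h1
  have hI0 : constantCoeff I₀ = 0 := by
    have E' : (MvPolynomial.finSuccEquiv ℚ e' (PowerSeries.coeff 2 I₀))
        * (1 + 2 * Polynomial.X * MvPolynomial.finSuccEquiv ℚ e' (PowerSeries.coeff 0 I₀)) = -Polynomial.X := by
      have := congrArg (MvPolynomial.finSuccEquiv ℚ e') E
      simpa [map_mul, map_add, map_one, map_neg, map_ofNat,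
        MvPolynomial.finSuccEquiv_X_zero] using this
    set b := MvPolynomial.finSuccEquiv ℚ e' (PowerSeries.coeff 0 I₀) with hb
    have hXdvd : (Polynomial.X : Polynomial (MvPolynomial (Fin e') ℚ))
        ∣ MvPolynomial.finSuccEquiv ℚ e' (PowerSeries.coeff 2 I₀) * (1 + 2 * Polynomial.X * b) := by
      exact ⟨-1, by linear_combination E'⟩
    have hnd : ¬ (Polynomial.X : Polynomial (MvPolynomial (Fin e') ℚ))
        ∣ (1 + 2 * Polynomial.X * b) := by
      rw [Polynomial.X_dvd_iff]
      simp [Polynomial.coeff_one, Polynomial.mul_coeff_zero, Polynomial.coeff_X_zero]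
    obtain ⟨w, hw⟩ := (Polynomial.prime_X.2.2 _ _ hXdvd).resolve_right hnd
    have hwu : w * (1 + 2 * Polynomial.X * b) = -1 := by
      have hX0 : (Polynomial.X : Polynomial (MvPolynomial (Fin e') ℚ)) ≠ 0 :=
        Polynomial.X_ne_zero
      apply mul_left_cancel₀ hX0
      rw [show Polynomial.X * (w * (1 + 2 * Polynomial.X * b))
          = (Polynomial.X * w) * (1 + 2 * Polynomial.X * b) from by ring, ← hw, E']
      ring
    have hunit : IsUnit (1 + 2 * Polynomial.X * b) :=
      IsUnit.of_mul_eq_one (-w) (by linear_combination -hwu)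
    obtain ⟨r, hr, hrC⟩ := Polynomial.isUnit_iff.1 hunit
    have hr1 : r = 1 := by
      have := congrArg (fun p => Polynomial.coeff p 0) hrC
      simpa [Polynomial.coeff_one, mul_assoc] using this
    rw [hr1] at hrC
    have hzero : 2 * Polynomial.X * b = 0 := by
      have : (Polynomial.C (1 : MvPolynomial (Fin e') ℚ)) = 1 := map_one _
      linear_combination this - hrC
    have hb0 : b = 0 := by
      rcases mul_eq_zero.1 hzero with h | h
      · rcases mul_eq_zero.1 h with h' | h'
        · exact absurd h' (by norm_num)
        · exact absurd h' Polynomial.X_ne_zero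
      · exact h
    have hcc : constantCoeff I₀
        = PowerSeries.coeff 0 I₀ :=
      (PowerSeries.coeff_zero_eq_constantCoeff_apply I₀).symm
    rw [hcc]
    refine (MvPolynomial.finSuccEquiv ℚ e').injective ?_
    rw [map_zero, ← hb]
    exact hb0
  -- split psComp F = I₀ + psComp U
  have hUeq : psComp (Stmt18Aux.UU (e' + 1)) I₀ = PowerSeries.X - I₀ := by
    have hstep : psComp (Stmt18Aux.FF (e' + 1)) I₀ = I₀ + psComp (Stmt18Aux.UU (e' + 1)) I₀ := by
      rw [Stmt18Aux.FF, Stmt18Aux.psComp_add_left, Stmt18Aux.psComp_X_left hI0]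
    rw [← hFinv, hstep]
    ring
  -- two-sided inverse
  have hK : psComp I₀ (Stmt18Aux.FF (e' + 1)) = PowerSeries.X := by
    have hcomp : psComp (Stmt18Aux.FF (e' + 1)) (psComp I₀ (Stmt18Aux.FF (e' + 1)))
        = psComp (Stmt18Aux.FF (e' + 1)) PowerSeries.X := by
      rw [Stmt18Aux.psComp_X_right, ← Stmt18Aux.psComp_assoc hI0 (Stmt18Aux.hF0 (e' + 1)),
        hFinv, Stmt18Aux.psComp_X_left (Stmt18Aux.hF0 (e' + 1))]
    have h0K : constantCoeff (psComp I₀ (Stmt18Aux.FF (e' + 1))) = 0 := by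
      rw [Stmt18Aux.constantCoeff_psComp]; exact hI0
    rw [Stmt18Aux.FF] at hcomp
    exact Stmt18Aux.psComp_cancel (Stmt18Aux.hU0 (e' + 1)) (Stmt18Aux.hU1 (e' + 1)) h0K
      PowerSeries.constantCoeff_X hcomp
  -- derivative identity
  have hone : psComp (d⁄dX (Stmt18Aux.Rg (e' + 1)) I₀) (Stmt18Aux.FF (e' + 1)) * d⁄dX (Stmt18Aux.Rg (e' + 1)) (Stmt18Aux.FF (e' + 1))
      = 1 := by
    have hd := congrArg (d⁄dX (Stmt18Aux.Rg (e' + 1))) hK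
    rwa [Stmt18Aux.derivative_psComp (Stmt18Aux.hF0 (e' + 1)), PowerSeries.derivative_X] at hd
  have hkey : PowerSeries.coeff (j + 1) (Stmt18Aux.WW (e' + 1) ^ (j + 2))
      = PowerSeries.coeff (j + 2) I₀ * (((j : (Stmt18Aux.Rg (e' + 1))) + 1) + 1) := by
    have hcv := Stmt18Aux.changevar (e' + 1) (j + 1) (d⁄dX (Stmt18Aux.Rg (e' + 1)) I₀)
    rw [← mul_assoc, hone, one_mul, PowerSeries.coeff_derivative] at hcv
    rw [hcv]
    push_cast
    ring
  -- expansion of W^(j+2) via invOneSubPow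
  have hneg0 : constantCoeff (-(Stmt18Aux.VV (e' + 1))) = 0 := by
    rw [map_neg, Stmt18Aux.hV0, neg_zero]
  have hprod : ((1 : PowerSeries (Stmt18Aux.Rg (e' + 1))) - PowerSeries.X) ^ (j + 2)
      * ((invOneSubPow (Stmt18Aux.Rg (e' + 1)) (j + 2)).val) = 1 := by
    have hv := (invOneSubPow (Stmt18Aux.Rg (e' + 1)) (j + 2)).inv_val
    rwa [invOneSubPow_inv_eq_one_sub_pow] at hv
  have hsv : psComp ((1 - PowerSeries.X) ^ (j + 2)) (-(Stmt18Aux.VV (e' + 1)))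
      = (1 + Stmt18Aux.VV (e' + 1)) ^ (j + 2) := by
    rw [Stmt18Aux.psComp_pow hneg0, sub_eq_add_neg, Stmt18Aux.psComp_add_left,
      Stmt18Aux.psComp_one, Stmt18Aux.psComp_neg_left, Stmt18Aux.psComp_X_left hneg0,
      neg_neg]
  have hSinv : (1 + Stmt18Aux.VV (e' + 1)) ^ (j + 2)
      * psComp ((invOneSubPow (Stmt18Aux.Rg (e' + 1)) (j + 2)).val)
          (-(Stmt18Aux.VV (e' + 1))) = 1 := by
    rw [← hsv, ← Stmt18Aux.psComp_mul hneg0, hprod, Stmt18Aux.psComp_one]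
  have hWS : Stmt18Aux.WW (e' + 1) ^ (j + 2)
      = psComp ((invOneSubPow (Stmt18Aux.Rg (e' + 1)) (j + 2)).val)
          (-(Stmt18Aux.VV (e' + 1))) := by
    calc Stmt18Aux.WW (e' + 1) ^ (j + 2)
        = ((1 + Stmt18Aux.VV (e' + 1)) ^ (j + 2)
            * psComp ((invOneSubPow (Stmt18Aux.Rg (e' + 1)) (j + 2)).val)
                (-(Stmt18Aux.VV (e' + 1)))) * Stmt18Aux.WW (e' + 1) ^ (j + 2) := by
          rw [hSinv, one_mul]
      _ = psComp ((invOneSubPow (Stmt18Aux.Rg (e' + 1)) (j + 2)).val)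
            (-(Stmt18Aux.VV (e' + 1)))
            * ((1 + Stmt18Aux.VV (e' + 1)) * Stmt18Aux.WW (e' + 1)) ^ (j + 2) := by
          rw [mul_pow]; ring
      _ = _ := by rw [Stmt18Aux.hW, one_pow, mul_one]
  -- multinomial expansion of coefficients of V^k
  have hVk : ∀ k : ℕ,
      PowerSeries.coeff (j + 1) (Stmt18Aux.VV (e' + 1) ^ k)
      = ∑ a ∈ Finset.piAntidiag (Finset.univ : Finset (Fin (e' + 1))) k,
          ((Nat.multinomial Finset.univ a : ℕ) : Stmt18Aux.Rg (e' + 1))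
            * (if ∑ s : Fin (e' + 1), ((s : ℕ) + 1) * a s = j + 1
                then ∏ s : Fin (e' + 1), MvPolynomial.X s ^ a s else 0) := by
    intro k
    rw [Stmt18Aux.VV, Finset.sum_pow_eq_sum_piAntidiag, map_sum]
    refine Finset.sum_congr rfl fun a _ => ?_
    have hterm : (∏ s : Fin (e' + 1),
          ((PowerSeries.monomial ((s : ℕ) + 1))
            (MvPolynomial.X s : Stmt18Aux.Rg (e' + 1))) ^ a s)
        = PowerSeries.C
            (∏ s : Fin (e' + 1), MvPolynomial.X s ^ a s)
            * PowerSeries.X ^ (∑ s : Fin (e' + 1), ((s : ℕ) + 1) * a s) := by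
      calc (∏ s : Fin (e' + 1),
            ((PowerSeries.monomial ((s : ℕ) + 1))
              (MvPolynomial.X s : Stmt18Aux.Rg (e' + 1))) ^ a s)
          = ∏ s : Fin (e' + 1),
              (PowerSeries.C (MvPolynomial.X s ^ a s)
                * PowerSeries.X ^ (((s : ℕ) + 1) * a s)) := by
            refine Finset.prod_congr rfl fun s _ => ?_
            rw [Stmt18Aux.ps_monomial_eq, mul_pow, ← map_pow, ← pow_mul]
        _ = _ := by
            rw [Finset.prod_mul_distrib, ← map_prod, Finset.prod_pow_eq_pow_sum]
    have hcast : ((Nat.multinomial Finset.univ a : ℕ)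
          : PowerSeries (Stmt18Aux.Rg (e' + 1)))
        = PowerSeries.C
            ((Nat.multinomial Finset.univ a : ℕ) : Stmt18Aux.Rg (e' + 1)) := by
      rw [map_natCast]
    rw [hterm, hcast, ← mul_assoc, ← map_mul, PowerSeries.coeff_C_mul,
      PowerSeries.coeff_X_pow]
    by_cases hw : (∑ s : Fin (e' + 1), ((s : ℕ) + 1) * a s) = j + 1
    · rw [if_pos hw.symm, if_pos hw, mul_one]
    · rw [if_neg (fun hc => hw hc.symm), if_neg hw, mul_zero, mul_zero]
  -- the main reindexed sum
  have hmaps : ∀ a ∈ ((Fintype.piFinset fun _ : Fin (e' + 1) => Finset.range (j + 2)).filter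
        (fun a : Fin (e' + 1) → ℕ => ∑ s : Fin (e' + 1), ((s : ℕ) + 1) * a s = j + 1)),
      (∑ s : Fin (e' + 1), a s) ∈ Finset.range (j + 1 + 1) := by
    intro a ha
    obtain ⟨-, hwt⟩ := Finset.mem_filter.1 ha
    have hle : (∑ s : Fin (e' + 1), a s) ≤ ∑ s : Fin (e' + 1), ((s : ℕ) + 1) * a s :=
      Finset.sum_le_sum fun s _ => Nat.le_mul_of_pos_left _ (by omega)
    rw [Finset.mem_range]
    omega
  have hsets : ∀ k : ℕ,
      (Finset.piAntidiag (Finset.univ : Finset (Fin (e' + 1))) k).filter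
        (fun a : Fin (e' + 1) → ℕ => ∑ s : Fin (e' + 1), ((s : ℕ) + 1) * a s = j + 1)
      = ((Fintype.piFinset fun _ : Fin (e' + 1) => Finset.range (j + 2)).filter
          (fun a : Fin (e' + 1) → ℕ => ∑ s : Fin (e' + 1), ((s : ℕ) + 1) * a s = j + 1)).filter
            (fun a : Fin (e' + 1) → ℕ => ∑ s : Fin (e' + 1), a s = k) := by
    intro k
    ext a
    simp only [Finset.mem_filter, Finset.mem_piAntidiag, Fintype.mem_piFinset,
      Finset.mem_range]
    constructor
    · rintro ⟨⟨hsum, -⟩, hwt⟩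
      refine ⟨⟨fun s => ?_, hwt⟩, hsum⟩
      have h1 : ((s : ℕ) + 1) * a s ≤ ∑ s' : Fin (e' + 1), ((s' : ℕ) + 1) * a s' :=
        Finset.single_le_sum (f := fun s' : Fin (e' + 1) => ((s' : ℕ) + 1) * a s')
          (fun i _ => Nat.zero_le _) (Finset.mem_univ s)
      have h2 : a s ≤ ((s : ℕ) + 1) * a s := Nat.le_mul_of_pos_left _ (by omega)
      omega
    · rintro ⟨⟨-, hwt⟩, hsum⟩
      exact ⟨⟨hsum, fun s _ => Finset.mem_univ s⟩, hwt⟩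
  have hmain : PowerSeries.coeff (j + 1)
        (Stmt18Aux.WW (e' + 1) ^ (j + 2))
      = Finset.sum
          ((Fintype.piFinset fun _ : Fin (e' + 1) => Finset.range (j + 2)).filter
            (fun a : Fin (e' + 1) → ℕ => ∑ s : Fin (e' + 1), ((s : ℕ) + 1) * a s = j + 1))
          (fun a : Fin (e' + 1) → ℕ =>
            (-1 : MvPolynomial (Fin (e' + 1)) ℚ) ^ (∑ s, a s) * (multinom a (j + 1) :
                MvPolynomial (Fin (e' + 1)) ℚ) *
              ∏ s : Fin (e' + 1), (MvPolynomial.X s : MvPolynomial (Fin (e' + 1)) ℚ) ^ a s) := by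
    rw [hWS, Stmt18Aux.coeff_psComp]
    have hval : ∀ k : ℕ,
        PowerSeries.coeff k
            ((invOneSubPow (Stmt18Aux.Rg (e' + 1)) (j + 2)).val)
        = ((Nat.choose (j + 1 + k) (j + 1) : ℕ) : Stmt18Aux.Rg (e' + 1)) := by
      intro k
      rw [invOneSubPow_val_eq_mk_sub_one_add_choose_of_pos _ _ (by omega),
        PowerSeries.coeff_mk]
      have hj : j + 2 - 1 = j + 1 := by omega
      rw [hj]
    have hnegpow : ∀ k : ℕ,
        PowerSeries.coeff (j + 1) ((-(Stmt18Aux.VV (e' + 1))) ^ k)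
        = (-1 : Stmt18Aux.Rg (e' + 1)) ^ k
            * PowerSeries.coeff (j + 1)
                (Stmt18Aux.VV (e' + 1) ^ k) := by
      intro k
      rw [neg_pow, show ((-1 : PowerSeries (Stmt18Aux.Rg (e' + 1))) ^ k)
          = PowerSeries.C ((-1 : Stmt18Aux.Rg (e' + 1)) ^ k) from by
            rw [map_pow, map_neg, map_one], PowerSeries.coeff_C_mul]
    have hstep1 : ∀ k ∈ Finset.range (j + 1 + 1),
        PowerSeries.coeff k
            ((invOneSubPow (Stmt18Aux.Rg (e' + 1)) (j + 2)).val)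
          * PowerSeries.coeff (j + 1)
              ((-(Stmt18Aux.VV (e' + 1))) ^ k)
        = ∑ a ∈ (((Fintype.piFinset fun _ : Fin (e' + 1) => Finset.range (j + 2)).filter
              (fun a : Fin (e' + 1) → ℕ =>
                ∑ s : Fin (e' + 1), ((s : ℕ) + 1) * a s = j + 1)).filter
                (fun a : Fin (e' + 1) → ℕ => ∑ s : Fin (e' + 1), a s = k)),
            (-1 : MvPolynomial (Fin (e' + 1)) ℚ) ^ (∑ s, a s) * (multinom a (j + 1) :
                MvPolynomial (Fin (e' + 1)) ℚ) *
              ∏ s : Fin (e' + 1), (MvPolynomial.X s : MvPolynomial (Fin (e' + 1)) ℚ) ^ a s := by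
      intro k _
      rw [hval, hnegpow, hVk, Finset.mul_sum, Finset.mul_sum]
      have hper : ∀ a ∈ Finset.piAntidiag (Finset.univ : Finset (Fin (e' + 1))) k,
          ((Nat.choose (j + 1 + k) (j + 1) : ℕ) : Stmt18Aux.Rg (e' + 1))
            * ((-1 : Stmt18Aux.Rg (e' + 1)) ^ k
              * (((Nat.multinomial Finset.univ a : ℕ) : Stmt18Aux.Rg (e' + 1))
                * (if ∑ s : Fin (e' + 1), ((s : ℕ) + 1) * a s = j + 1
                    then ∏ s : Fin (e' + 1), MvPolynomial.X s ^ a s else 0)))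
          = (if ∑ s : Fin (e' + 1), ((s : ℕ) + 1) * a s = j + 1
              then (-1 : MvPolynomial (Fin (e' + 1)) ℚ) ^ (∑ s, a s)
                * (multinom a (j + 1) : MvPolynomial (Fin (e' + 1)) ℚ)
                * ∏ s : Fin (e' + 1), (MvPolynomial.X s : MvPolynomial (Fin (e' + 1)) ℚ) ^ a s
              else 0) := by
        intro a ha
        have hak : ∑ s : Fin (e' + 1), a s = k := (Finset.mem_piAntidiag.1 ha).1
        by_cases hw : ∑ s : Fin (e' + 1), ((s : ℕ) + 1) * a s = j + 1
        · rw [if_pos hw, if_pos hw, ← hak]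
          have hmul := Stmt18Aux.multinom_eq a (j + 1)
          rw [Nat.add_comm (∑ i, a i) (j + 1)] at hmul
          have hmulc : ((multinom a (j + 1) : ℕ) : Stmt18Aux.Rg (e' + 1))
              = ((Nat.choose (j + 1 + ∑ i, a i) (j + 1) : ℕ) : Stmt18Aux.Rg (e' + 1))
                * ((Nat.multinomial Finset.univ a : ℕ) : Stmt18Aux.Rg (e' + 1)) := by
            rw [hmul]
            push_cast
            ring
          rw [hmulc]
          ring
        · rw [if_neg hw, if_neg hw, mul_zero, mul_zero, mul_zero]
      rw [Finset.sum_congr rfl hper, ← Finset.sum_filter, hsets k]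
    rw [Finset.sum_congr rfl hstep1]
    exact Finset.sum_fiberwise_of_maps_to hmaps _
  -- final assembly
  have hL : PowerSeries.coeff (j + 2)
        (psComp (Stmt18Aux.UU (e' + 1)) I₀)
      = -(PowerSeries.coeff (j + 2) I₀) := by
    rw [hUeq, map_sub, PowerSeries.coeff_X, if_neg (by omega), zero_sub]
  rw [show (∑ j : Fin (e' + 1), (PowerSeries.monomial
      ((j : ℕ) + 2)) (MvPolynomial.X j)) = Stmt18Aux.UU (e' + 1) from rfl, hL, ← hmain,
    hkey, Algebra.smul_def]
  have hy : ((j : Stmt18Aux.Rg (e' + 1)) + 1 + 1)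
      = algebraMap ℚ (Stmt18Aux.Rg (e' + 1)) ((j : ℚ) + 1 + 1) := by
    rw [map_add, map_add, map_one, map_natCast]
  have hcc : algebraMap ℚ (Stmt18Aux.Rg (e' + 1)) (-(1 / ((j : ℚ) + 2)))
      * ((j : Stmt18Aux.Rg (e' + 1)) + 1 + 1) = -1 := by
    rw [hy, ← map_mul, show (-(1 / ((j : ℚ) + 2))) * ((j : ℚ) + 1 + 1) = -1 from by
      have hj0 : ((j : ℚ) + 2) ≠ 0 := by positivity
      field_simp
      ring, map_neg, map_one]
  linear_combination (-(PowerSeries.coeff (j + 2) I₀)) * hcc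
end
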